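/- Singular Gronwall with singular forcing: Let T > 0 and S : (0, T] → [0, ∞) be measurable and bounded, satisfying S(t) ≤ D₁ ε/√t + D₂ ε + D₃ ∫₀^t S(s)/√(t−s) ds for all t ∈ (0, T], where D₁, D₂, D₃ ≥ 0 and ε > 0. Then for each fixed t ∈ (0, T] there is a constant C = C(D₁, D₂, D₃, T, t) such that S(t) ≤ C ε. -/

import Mathlib

open Set MeasureTheory intervalIntegral

lemma SG.inv_sqrt_eq : (fun r : ℝ => 1 / Real.sqrt r) = fun r : ℝ => r ^ (-(1/2) : ℝ) := by
  funext r
  rcases lt_trichotomy r 0 with h | h | h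
  · rw [Real.sqrt_eq_zero_of_nonpos h.le, Real.rpow_def_of_neg h]
    have : Real.cos (2⁻¹ * Real.pi) = 0 := by
      rw [show (2⁻¹ : ℝ) * Real.pi = Real.pi/2 by ring, Real.cos_pi_div_two]
    simp [this]
  · simp [h]
  · rw [Real.rpow_neg h.le, ← Real.sqrt_eq_rpow, one_div]

lemma SG.ii_inv_sqrt (a b : ℝ) : IntervalIntegrable (fun r => 1 / Real.sqrt r) volume a b := by
  rw [SG.inv_sqrt_eq]
  exact intervalIntegral.intervalIntegrable_rpow' (by norm_num)

lemma SG.integral_inv_sqrt {b : ℝ} (hb : 0 ≤ b) :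
    ∫ r in (0:ℝ)..b, 1 / Real.sqrt r = 2 * Real.sqrt b := by
  rw [SG.inv_sqrt_eq, integral_rpow (Or.inl (by norm_num))]
  norm_num
  rw [← Real.sqrt_eq_rpow]
  ring

lemma SG.integral_inv_sqrt' (a b : ℝ) :
    ∫ r in a..b, 1 / Real.sqrt r = 2 * Real.sqrt b - 2 * Real.sqrt a := by
  rw [SG.inv_sqrt_eq, integral_rpow (Or.inl (by norm_num))]
  norm_num
  rw [← Real.sqrt_eq_rpow, ← Real.sqrt_eq_rpow]
  ring

lemma SG.ii_refl (a b s : ℝ) :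
    IntervalIntegrable (fun r => 1 / Real.sqrt (s - r)) volume a b := by
  have := (SG.ii_inv_sqrt (s - a) (s - b)).comp_sub_left s
  simpa using this

lemma SG.integral_refl (a b s : ℝ) :
    ∫ r in a..b, 1 / Real.sqrt (s - r)
      = 2 * Real.sqrt (s - a) - 2 * Real.sqrt (s - b) := by
  rw [intervalIntegral.integral_comp_sub_left (fun r => 1 / Real.sqrt r) s,
    SG.integral_inv_sqrt']

lemma SG.integrableOn_refl (a b s : ℝ) (hab : a ≤ b) :
    IntegrableOn (fun r => 1 / Real.sqrt (s - r)) (Ioc a b) := by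
  rw [← intervalIntegrable_iff_integrableOn_Ioc_of_le hab]
  exact SG.ii_refl a b s

lemma SG.integrableOn_div {S : ℝ → ℝ} (hS : Measurable S) {M a b s : ℝ} (hab : a ≤ b)
    (hM : ∀ r ∈ Ioc a b, |S r| ≤ M) :
    IntegrableOn (fun r => S r / Real.sqrt (s - r)) (Ioc a b) := by
  apply Integrable.mono' (g := fun r => M * (1 / Real.sqrt (s - r)))
  · exact (SG.integrableOn_refl a b s hab).const_mul M
  · exact (hS.div ((Real.continuous_sqrt.measurable).comp
      (measurable_const.sub measurable_id))).aestronglyMeasurable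
  · rw [MeasureTheory.ae_restrict_iff' measurableSet_Ioc]
    filter_upwards with r hr
    have h1 : (0:ℝ) ≤ 1 / Real.sqrt (s - r) := by positivity
    have : ‖S r / Real.sqrt (s - r)‖ = |S r| * (1 / Real.sqrt (s - r)) := by
      rw [Real.norm_eq_abs, abs_div, abs_of_nonneg (Real.sqrt_nonneg _)]
      ring
    rw [this]
    exact mul_le_mul_of_nonneg_right (hM r hr) h1

lemma SG.setint_inv_sqrt {a b : ℝ} (hab : a ≤ b) :
    ∫ r in Ioc a b, 1 / Real.sqrt r = 2 * Real.sqrt b - 2 * Real.sqrt a := by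
  rw [← intervalIntegral.integral_of_le hab, SG.integral_inv_sqrt']

lemma SG.setint_refl {a b : ℝ} (s : ℝ) (hab : a ≤ b) :
    ∫ r in Ioc a b, 1 / Real.sqrt (s - r)
      = 2 * Real.sqrt (s - a) - 2 * Real.sqrt (s - b) := by
  rw [← intervalIntegral.integral_of_le hab, SG.integral_refl]

lemma SG.kern {S : ℝ → ℝ} (hS : Measurable S) {K s q M : ℝ} (hq : 0 < q) (hqs : q ≤ s)
    (hK : 0 ≤ K) (hMb : ∀ r ∈ Ioc (0:ℝ) q, |S r| ≤ M)
    (hb : ∀ r ∈ Ioc (0:ℝ) q, 0 ≤ S r ∧ Real.sqrt r * S r ≤ K) :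
    ∫ r in Ioc (0:ℝ) q, S r / Real.sqrt (s - r) ≤ 4 * K := by
  have hs : 0 < s := lt_of_lt_of_le hq hqs
  have hs2 : 0 < s / 2 := by linarith
  have hsq2 : 0 < Real.sqrt (s / 2) := Real.sqrt_pos.2 hs2
  set m := min q (s / 2) with hm
  have hm0 : 0 < m := lt_min hq hs2
  have hmq : m ≤ q := min_le_left _ _
  have hms : m ≤ s / 2 := min_le_right _ _
  -- pointwise bound helper
  have hptS : ∀ r ∈ Ioc (0:ℝ) q, S r ≤ K / Real.sqrt r := by
    intro r hr
    have hrp : 0 < Real.sqrt r := Real.sqrt_pos.2 hr.1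
    rw [le_div_iff₀ hrp, mul_comm]
    exact (hb r hr).2
  -- split
  have hsplit : Ioc (0:ℝ) q = Ioc 0 m ∪ Ioc m q := (Set.Ioc_union_Ioc_eq_Ioc hm0.le hmq).symm
  have hint1 : IntegrableOn (fun r => S r / Real.sqrt (s - r)) (Ioc 0 m) :=
    SG.integrableOn_div hS hm0.le (fun r hr => hMb r ⟨hr.1, hr.2.trans hmq⟩)
  have hint2 : IntegrableOn (fun r => S r / Real.sqrt (s - r)) (Ioc m q) :=
    SG.integrableOn_div hS hmq (fun r hr => hMb r ⟨hm0.trans hr.1, hr.2⟩)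
  rw [hsplit, MeasureTheory.setIntegral_union (Set.Ioc_disjoint_Ioc_of_le le_rfl) measurableSet_Ioc
    hint1 hint2]
  have hp1 : ∫ r in Ioc (0:ℝ) m, S r / Real.sqrt (s - r) ≤ 2 * K := by
    have hg : IntegrableOn (fun r => K / Real.sqrt (s/2) * (1 / Real.sqrt r)) (Ioc (0:ℝ) m) := by
      exact ((intervalIntegrable_iff_integrableOn_Ioc_of_le hm0.le).1
        (SG.ii_inv_sqrt 0 m)).const_mul _
    have := MeasureTheory.integral_mono_of_nonneg (μ := volume.restrict (Ioc (0:ℝ) m))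
      (f := fun r => S r / Real.sqrt (s - r))
      (g := fun r => K / Real.sqrt (s/2) * (1 / Real.sqrt r)) ?_ hg ?_
    · refine this.trans ?_
      rw [MeasureTheory.integral_const_mul, SG.setint_inv_sqrt hm0.le]
      have h1 : Real.sqrt m ≤ Real.sqrt (s/2) := Real.sqrt_le_sqrt hms
      have : K / Real.sqrt (s/2) * (2 * Real.sqrt m - 2 * Real.sqrt 0)
          ≤ K / Real.sqrt (s/2) * (2 * Real.sqrt (s/2)) := by
        apply mul_le_mul_of_nonneg_left _ (by positivity)
        rw [Real.sqrt_zero]; linarith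
      refine this.trans ?_
      have heq : K / Real.sqrt (s/2) * (2 * Real.sqrt (s/2)) = 2 * K := by
        field_simp
      rw [heq]

    · filter_upwards [MeasureTheory.ae_restrict_mem measurableSet_Ioc] with r hr
      exact div_nonneg (hb r ⟨hr.1, hr.2.trans hmq⟩).1 (Real.sqrt_nonneg _)
    · filter_upwards [MeasureTheory.ae_restrict_mem measurableSet_Ioc] with r hr
      have hrq : r ∈ Ioc (0:ℝ) q := ⟨hr.1, hr.2.trans hmq⟩
      have h2 : Real.sqrt (s/2) ≤ Real.sqrt (s - r) := Real.sqrt_le_sqrt (by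
        have := hr.2; have := hms; linarith)
      have h3 : (1:ℝ) / Real.sqrt (s - r) ≤ 1 / Real.sqrt (s/2) :=
        one_div_le_one_div_of_le hsq2 h2
      calc S r / Real.sqrt (s - r) = S r * (1 / Real.sqrt (s - r)) := by ring
        _ ≤ (K / Real.sqrt r) * (1 / Real.sqrt (s/2)) :=
            mul_le_mul (hptS r hrq) h3 (by positivity) (by positivity)
        _ = K / Real.sqrt (s/2) * (1 / Real.sqrt r) := by ring
  have hp2 : ∫ r in Ioc m q, S r / Real.sqrt (s - r) ≤ 2 * K := by
    rcases le_or_gt q (s/2) with hc | hc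
    · have : m = q := min_eq_left hc
      rw [this]
      simp
      positivity
    · have hmeq : m = s/2 := min_eq_right hc.le
      have hg : IntegrableOn (fun r => K / Real.sqrt (s/2) * (1 / Real.sqrt (s - r))) (Ioc m q) :=
        (SG.integrableOn_refl m q s hmq).const_mul _
      have := MeasureTheory.integral_mono_of_nonneg (μ := volume.restrict (Ioc m q))
        (f := fun r => S r / Real.sqrt (s - r))
        (g := fun r => K / Real.sqrt (s/2) * (1 / Real.sqrt (s - r))) ?_ hg ?_
      · refine this.trans ?_
        rw [MeasureTheory.integral_const_mul, SG.setint_refl s hmq, hmeq]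
        have : K / Real.sqrt (s/2) * (2 * Real.sqrt (s - s/2) - 2 * Real.sqrt (s - q))
            ≤ K / Real.sqrt (s/2) * (2 * Real.sqrt (s/2)) := by
          apply mul_le_mul_of_nonneg_left _ (by positivity)
          have : s - s/2 = s/2 := by ring
          rw [this]
          have := Real.sqrt_nonneg (s - q)
          linarith
        refine this.trans ?_
        have heq : K / Real.sqrt (s/2) * (2 * Real.sqrt (s/2)) = 2 * K := by
          field_simp
        rw [heq]
      · filter_upwards [MeasureTheory.ae_restrict_mem measurableSet_Ioc] with r hr
        exact div_nonneg (hb r ⟨hm0.trans hr.1, hr.2⟩).1 (Real.sqrt_nonneg _)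
      · filter_upwards [MeasureTheory.ae_restrict_mem measurableSet_Ioc] with r hr
        have hrq : r ∈ Ioc (0:ℝ) q := ⟨hm0.trans hr.1, hr.2⟩
        have hrm : Real.sqrt (s/2) ≤ Real.sqrt r := by
          rw [← hmeq]; exact Real.sqrt_le_sqrt hr.1.le
        have h5 : K / Real.sqrt r ≤ K / Real.sqrt (s/2) := by
          gcongr
        have h6 : S r ≤ K / Real.sqrt (s/2) := (hptS r hrq).trans h5
        calc S r / Real.sqrt (s - r) = S r * (1 / Real.sqrt (s - r)) := by ring
          _ ≤ (K / Real.sqrt (s/2)) * (1 / Real.sqrt (s - r)) :=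
              mul_le_mul_of_nonneg_right h6 (by positivity)
  linarith

lemma SG.tail {S : ℝ → ℝ} (hS : Measurable S) {W s q M : ℝ} (hq : 0 < q) (hqs : q ≤ s)
    (hW : 0 ≤ W) (hMb : ∀ r ∈ Ioc q s, |S r| ≤ M)
    (hb : ∀ r ∈ Ioc q s, 0 ≤ S r ∧ Real.sqrt r * S r ≤ W) :
    ∫ r in Ioc q s, S r / Real.sqrt (s - r)
      ≤ W / Real.sqrt q * (2 * Real.sqrt (s - q)) := by
  have hsq : 0 < Real.sqrt q := Real.sqrt_pos.2 hq
  have hg : IntegrableOn (fun r => W / Real.sqrt q * (1 / Real.sqrt (s - r))) (Ioc q s) :=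
    (SG.integrableOn_refl q s s hqs).const_mul _
  have hmono := MeasureTheory.integral_mono_of_nonneg (μ := volume.restrict (Ioc q s))
    (f := fun r => S r / Real.sqrt (s - r))
    (g := fun r => W / Real.sqrt q * (1 / Real.sqrt (s - r))) ?_ hg ?_
  · refine hmono.trans ?_
    rw [MeasureTheory.integral_const_mul, SG.setint_refl s hqs]
    have : (2 * Real.sqrt (s - q) - 2 * Real.sqrt (s - s)) = 2 * Real.sqrt (s - q) := by
      simp
    rw [this]
  · filter_upwards [MeasureTheory.ae_restrict_mem measurableSet_Ioc] with r hr
    exact div_nonneg (hb r hr).1 (Real.sqrt_nonneg _)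
  · filter_upwards [MeasureTheory.ae_restrict_mem measurableSet_Ioc] with r hr
    have hrp : 0 < Real.sqrt r := Real.sqrt_pos.2 (hq.trans hr.1)
    have h4 : S r ≤ W / Real.sqrt r := by
      rw [le_div_iff₀ hrp, mul_comm]; exact (hb r hr).2
    have h5 : W / Real.sqrt r ≤ W / Real.sqrt q := by
      gcongr
      exact hr.1.le
    calc S r / Real.sqrt (s - r) = S r * (1 / Real.sqrt (s - r)) := by ring
      _ ≤ (W / Real.sqrt q) * (1 / Real.sqrt (s - r)) :=
          mul_le_mul_of_nonneg_right (h4.trans h5) (by positivity)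
      _ = W / Real.sqrt q * (1 / Real.sqrt (s - r)) := rfl

lemma SG.mul_ineq {D₁ D₂ D₃ ε s : ℝ} {S : ℝ → ℝ} (hs : 0 < s)
    (hineq : S s ≤ D₁ * ε / Real.sqrt s + D₂ * ε +
      D₃ * ∫ r in (0:ℝ)..s, S r / Real.sqrt (s - r)) :
    Real.sqrt s * S s ≤ D₁ * ε + D₂ * ε * Real.sqrt s +
      D₃ * Real.sqrt s * ∫ r in Ioc (0:ℝ) s, S r / Real.sqrt (s - r) := by
  have hsq : 0 < Real.sqrt s := Real.sqrt_pos.2 hs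
  have h := mul_le_mul_of_nonneg_left hineq (Real.sqrt_nonneg s)
  calc Real.sqrt s * S s ≤ Real.sqrt s * (D₁ * ε / Real.sqrt s + D₂ * ε +
      D₃ * ∫ r in (0:ℝ)..s, S r / Real.sqrt (s - r)) := h
    _ = D₁ * ε + D₂ * ε * Real.sqrt s +
      D₃ * Real.sqrt s * ∫ r in (0:ℝ)..s, S r / Real.sqrt (s - r) := by
        field_simp
    _ = D₁ * ε + D₂ * ε * Real.sqrt s +
      D₃ * Real.sqrt s * ∫ r in Ioc (0:ℝ) s, S r / Real.sqrt (s - r) := by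
        rw [intervalIntegral.integral_of_le hs.le]

lemma SG.base {T D₁ D₂ D₃ δ ε M : ℝ} {S : ℝ → ℝ}
    (h1 : 0 ≤ D₁) (h2 : 0 ≤ D₂) (h3 : 0 ≤ D₃)
    (hδ0 : 0 < δ) (hδT : δ ≤ T) (hδc : Real.sqrt δ * D₃ ≤ 1/8)
    (hε : 0 < ε) (hS : Measurable S)
    (hpos : ∀ s ∈ Ioc (0:ℝ) T, 0 ≤ S s) (hM : ∀ s ∈ Ioc (0:ℝ) T, |S s| ≤ M)
    (hineq : ∀ s ∈ Ioc (0:ℝ) T, S s ≤ D₁ * ε / Real.sqrt s + D₂ * ε +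
      D₃ * ∫ r in (0:ℝ)..s, S r / Real.sqrt (s - r)) :
    ∀ s ∈ Ioc (0:ℝ) T, s ≤ δ →
      Real.sqrt s * S s ≤ (2 * (D₁ + D₂ * Real.sqrt T)) * ε := by
  set E := (fun r => Real.sqrt r * S r) '' (Ioc 0 δ) with hE
  have hδmem : δ ∈ Ioc (0:ℝ) δ := ⟨hδ0, le_refl δ⟩
  have hEne : E.Nonempty := ⟨_, Set.mem_image_of_mem _ hδmem⟩
  have hbdd : BddAbove E := by
    refine ⟨Real.sqrt T * max M 0, ?_⟩
    rintro x ⟨r, hr, rfl⟩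
    have hrT : r ∈ Ioc (0:ℝ) T := ⟨hr.1, hr.2.trans hδT⟩
    have h5 : S r ≤ max M 0 := le_trans (le_abs_self _) ((hM r hrT).trans (le_max_left _ _))
    exact mul_le_mul (Real.sqrt_le_sqrt (hrT.2)) h5 (hpos r hrT) (Real.sqrt_nonneg _)
  set W := sSup E with hW
  have hub : ∀ r ∈ Ioc (0:ℝ) δ, Real.sqrt r * S r ≤ W :=
    fun r hr => le_csSup hbdd (Set.mem_image_of_mem _ hr)
  have hW0 : 0 ≤ W :=
    le_trans (mul_nonneg (Real.sqrt_nonneg δ) (hpos δ ⟨hδ0, hδT⟩)) (hub δ hδmem)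
  have hA : (0:ℝ) ≤ D₁ + D₂ * Real.sqrt T := by positivity
  have key : ∀ x ∈ E, x ≤ (D₁ + D₂ * Real.sqrt T) * ε + W / 2 := by
    rintro x ⟨s, hs, rfl⟩
    have hsT : s ∈ Ioc (0:ℝ) T := ⟨hs.1, hs.2.trans hδT⟩
    have h0 := SG.mul_ineq hs.1 (hineq s hsT)
    have hkern : ∫ r in Ioc (0:ℝ) s, S r / Real.sqrt (s - r) ≤ 4 * W := by
      refine SG.kern (M := M) hS hs.1 le_rfl hW0 ?_ ?_
      · exact fun r hr => hM r ⟨hr.1, (hr.2.trans hs.2).trans hδT⟩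
      · exact fun r hr => ⟨hpos r ⟨hr.1, (hr.2.trans hs.2).trans hδT⟩,
          hub r ⟨hr.1, hr.2.trans hs.2⟩⟩
    have hss : Real.sqrt s ≤ Real.sqrt δ := Real.sqrt_le_sqrt hs.2
    have hterm : D₃ * Real.sqrt s * (∫ r in Ioc (0:ℝ) s, S r / Real.sqrt (s - r))
        ≤ W / 2 := by
      have e1 : D₃ * Real.sqrt s * (∫ r in Ioc (0:ℝ) s, S r / Real.sqrt (s - r))
          ≤ D₃ * Real.sqrt s * (4 * W) :=
        mul_le_mul_of_nonneg_left hkern (by positivity)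
      have e2 : D₃ * Real.sqrt s * (4 * W) = (Real.sqrt s * D₃) * 4 * W := by ring
      have e3 : (Real.sqrt s * D₃) * 4 * W ≤ (1/8 : ℝ) * 4 * W := by
        have h4 : Real.sqrt s * D₃ ≤ 1/8 :=
          le_trans (mul_le_mul_of_nonneg_right hss h3) hδc
        have : (Real.sqrt s * D₃) * 4 ≤ (1/8 : ℝ) * 4 := by linarith
        exact mul_le_mul_of_nonneg_right this hW0
      have e4 : (1/8 : ℝ) * 4 * W = W / 2 := by ring
      linarith
    have hD2 : D₂ * ε * Real.sqrt s ≤ D₂ * ε * Real.sqrt T :=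
      mul_le_mul_of_nonneg_left (Real.sqrt_le_sqrt hsT.2) (by positivity)
    have : Real.sqrt s * S s ≤ D₁ * ε + D₂ * ε * Real.sqrt T + W / 2 := by linarith
    linarith [this]
  have hWle : W ≤ (D₁ + D₂ * Real.sqrt T) * ε + W / 2 :=
    Real.sSup_le key (by positivity)
  have hW2 : W ≤ 2 * (D₁ + D₂ * Real.sqrt T) * ε := by linarith
  intro s hs hsδ
  refine (hub s ⟨hs.1, hsδ⟩).trans (le_trans hW2 (le_of_eq (by ring)))

lemma SG.step {T D₁ D₂ D₃ δ ε M B K : ℝ} {S : ℝ → ℝ}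
    (h1 : 0 ≤ D₁) (h2 : 0 ≤ D₂) (h3 : 0 ≤ D₃)
    (hδ0 : 0 < δ) (hδT : δ ≤ T) (hδc : Real.sqrt δ * D₃ ≤ 1/8)
    (hε : 0 < ε) (hS : Measurable S)
    (hpos : ∀ s ∈ Ioc (0:ℝ) T, 0 ≤ S s) (hM : ∀ s ∈ Ioc (0:ℝ) T, |S s| ≤ M)
    (hineq : ∀ s ∈ Ioc (0:ℝ) T, S s ≤ D₁ * ε / Real.sqrt s + D₂ * ε +
      D₃ * ∫ r in (0:ℝ)..s, S r / Real.sqrt (s - r))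
    (hB : δ ≤ B) (hK : 0 ≤ K)
    (ih : ∀ s ∈ Ioc (0:ℝ) T, s ≤ B → Real.sqrt s * S s ≤ K * ε) :
    ∀ s ∈ Ioc (0:ℝ) T, s ≤ B + δ →
      Real.sqrt s * S s ≤
        (2 * (K + (D₁ + D₂ * Real.sqrt T) + 4 * D₃ * Real.sqrt T * K)) * ε := by
  have hA : (0:ℝ) ≤ D₁ + D₂ * Real.sqrt T := by positivity
  have hG : (0:ℝ) ≤ K + (D₁ + D₂ * Real.sqrt T) + 4 * D₃ * Real.sqrt T * K := by positivity
  set G := K + (D₁ + D₂ * Real.sqrt T) + 4 * D₃ * Real.sqrt T * K with hGdef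
  set L := min (B + δ) T with hL
  have hL0 : 0 < L := lt_min (by linarith) (by linarith)
  have hLT : L ≤ T := min_le_right _ _
  set E := (fun r => Real.sqrt r * S r) '' (Ioc 0 L) with hE
  have hLmem : L ∈ Ioc (0:ℝ) L := ⟨hL0, le_refl L⟩
  have hEne : E.Nonempty := ⟨_, Set.mem_image_of_mem _ hLmem⟩
  have hbdd : BddAbove E := by
    refine ⟨Real.sqrt T * max M 0, ?_⟩
    rintro x ⟨r, hr, rfl⟩
    have hrT : r ∈ Ioc (0:ℝ) T := ⟨hr.1, hr.2.trans hLT⟩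
    have h5 : S r ≤ max M 0 := le_trans (le_abs_self _) ((hM r hrT).trans (le_max_left _ _))
    exact mul_le_mul (Real.sqrt_le_sqrt hrT.2) h5 (hpos r hrT) (Real.sqrt_nonneg _)
  set W := sSup E with hW
  have hub : ∀ r ∈ Ioc (0:ℝ) L, Real.sqrt r * S r ≤ W :=
    fun r hr => le_csSup hbdd (Set.mem_image_of_mem _ hr)
  have hW0 : 0 ≤ W :=
    le_trans (mul_nonneg (Real.sqrt_nonneg L) (hpos L ⟨hL0, hLT⟩)) (hub L hLmem)
  have hWsup : sSup E ≤ G * ε + W / 2 → W ≤ G * ε + W / 2 := by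
    rw [hW]; exact id
  clear_value W G L
  have key : ∀ x ∈ E, x ≤ G * ε + W / 2 := by
    rintro x ⟨s, hs, rfl⟩
    show Real.sqrt s * S s ≤ G * ε + W / 2
    have hsT : s ∈ Ioc (0:ℝ) T := ⟨hs.1, hs.2.trans hLT⟩
    rcases le_or_gt s B with hcase | hcase
    · have := ih s hsT hcase
      have hn : (0:ℝ) ≤ 4 * D₃ * Real.sqrt T * K := by positivity
      have hKG : K * ε ≤ G * ε :=
        mul_le_mul_of_nonneg_right (by rw [hGdef]; linarith) hε.le
      linarith
    · -- window case
      set q := max δ (s - δ) with hq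
      have hq0 : 0 < q := lt_of_lt_of_le hδ0 (le_max_left _ _)
      have hqs : q < s := by
        apply max_lt
        · linarith
        · linarith
      have hqB : q ≤ B := by
        apply max_le hB
        have : s ≤ B + δ := le_trans hs.2 (by rw [hL]; exact min_le_left _ _)
        linarith
      have hs2q : s ≤ 2 * q := by
        have h6 : s - δ ≤ q := le_max_right _ _
        have h7 : δ ≤ q := le_max_left _ _
        linarith
      have hsqδ : s - q ≤ δ := by
        have h6 : s - δ ≤ q := le_max_right _ _
        linarith
      have h0 := SG.mul_ineq hs.1 (hineq s hsT)
      -- split the integral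
      have hint1 : IntegrableOn (fun r => S r / Real.sqrt (s - r)) (Ioc 0 q) :=
        SG.integrableOn_div hS hq0.le
          (fun r hr => hM r ⟨hr.1, (hr.2.trans hqs.le).trans hsT.2⟩)
      have hint2 : IntegrableOn (fun r => S r / Real.sqrt (s - r)) (Ioc q s) :=
        SG.integrableOn_div hS hqs.le
          (fun r hr => hM r ⟨hq0.trans hr.1, hr.2.trans hsT.2⟩)
      have hsplit : ∫ r in Ioc (0:ℝ) s, S r / Real.sqrt (s - r)
          = (∫ r in Ioc (0:ℝ) q, S r / Real.sqrt (s - r))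
            + ∫ r in Ioc q s, S r / Real.sqrt (s - r) := by
        rw [← MeasureTheory.setIntegral_union (Set.Ioc_disjoint_Ioc_of_le le_rfl) measurableSet_Ioc
          hint1 hint2, Set.Ioc_union_Ioc_eq_Ioc hq0.le hqs.le]
      have hI1 : ∫ r in Ioc (0:ℝ) q, S r / Real.sqrt (s - r) ≤ 4 * (K * ε) := by
        refine SG.kern (M := M) hS hq0 hqs.le (by positivity) ?_ ?_
        · exact fun r hr => hM r ⟨hr.1, (hr.2.trans hqs.le).trans hsT.2⟩
        · intro r hr
          have hrT : r ∈ Ioc (0:ℝ) T := ⟨hr.1, (hr.2.trans hqs.le).trans hsT.2⟩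
          exact ⟨hpos r hrT, ih r hrT (hr.2.trans hqB)⟩
      have hI2 : ∫ r in Ioc q s, S r / Real.sqrt (s - r)
          ≤ W / Real.sqrt q * (2 * Real.sqrt (s - q)) := by
        refine SG.tail (M := M) hS hq0 hqs.le hW0 ?_ ?_
        · exact fun r hr => hM r ⟨hq0.trans hr.1, hr.2.trans hsT.2⟩
        · intro r hr
          have hrT : r ∈ Ioc (0:ℝ) T := ⟨hq0.trans hr.1, hr.2.trans hsT.2⟩
          exact ⟨hpos r hrT, hub r ⟨hq0.trans hr.1, hr.2.trans hs.2⟩⟩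
      -- combine
      have hqq : 0 < Real.sqrt q := Real.sqrt_pos.2 hq0
      have ht1 : D₃ * Real.sqrt s * (∫ r in Ioc (0:ℝ) q, S r / Real.sqrt (s - r))
          ≤ 4 * D₃ * Real.sqrt T * K * ε := by
        calc D₃ * Real.sqrt s * (∫ r in Ioc (0:ℝ) q, S r / Real.sqrt (s - r))
            ≤ D₃ * Real.sqrt s * (4 * (K * ε)) :=
              mul_le_mul_of_nonneg_left hI1 (by positivity)
          _ ≤ D₃ * Real.sqrt T * (4 * (K * ε)) := by
              have := Real.sqrt_le_sqrt hsT.2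
              have h8 : D₃ * Real.sqrt s ≤ D₃ * Real.sqrt T :=
                mul_le_mul_of_nonneg_left this h3
              exact mul_le_mul_of_nonneg_right h8 (by positivity)
          _ = 4 * D₃ * Real.sqrt T * K * ε := by ring
      have ht2 : D₃ * Real.sqrt s * (∫ r in Ioc q s, S r / Real.sqrt (s - r)) ≤ W / 2 := by
        have e1 : D₃ * Real.sqrt s * (∫ r in Ioc q s, S r / Real.sqrt (s - r))
            ≤ D₃ * Real.sqrt s * (W / Real.sqrt q * (2 * Real.sqrt (s - q))) :=
          mul_le_mul_of_nonneg_left hI2 (by positivity)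
        have e2 : D₃ * Real.sqrt s * (W / Real.sqrt q * (2 * Real.sqrt (s - q)))
            = W * (2 * D₃ * Real.sqrt s * Real.sqrt (s - q) / Real.sqrt q) := by
          field_simp
        have hsle : Real.sqrt s ≤ Real.sqrt 2 * Real.sqrt q := by
          rw [← Real.sqrt_mul (by norm_num : (0:ℝ) ≤ 2)]
          exact Real.sqrt_le_sqrt (by linarith)
        have hsqd : Real.sqrt (s - q) ≤ Real.sqrt δ := Real.sqrt_le_sqrt hsqδ
        have hs2 : Real.sqrt 2 ≤ 2 := by
          nlinarith [Real.sq_sqrt (by norm_num : (0:ℝ) ≤ 2), Real.sqrt_nonneg 2]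
        have e3 : 2 * D₃ * Real.sqrt s * Real.sqrt (s - q) / Real.sqrt q ≤ 1 / 2 := by
          rw [div_le_iff₀ hqq]
          have e4 : 2 * D₃ * Real.sqrt s * Real.sqrt (s - q)
              ≤ 2 * D₃ * (Real.sqrt 2 * Real.sqrt q) * Real.sqrt δ := by
            have n1 : (0:ℝ) ≤ 2 * D₃ := by positivity
            have step1 : 2 * D₃ * Real.sqrt s ≤ 2 * D₃ * (Real.sqrt 2 * Real.sqrt q) :=
              mul_le_mul_of_nonneg_left hsle n1
            calc 2 * D₃ * Real.sqrt s * Real.sqrt (s - q)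
                ≤ 2 * D₃ * (Real.sqrt 2 * Real.sqrt q) * Real.sqrt (s - q) :=
                  mul_le_mul_of_nonneg_right step1 (Real.sqrt_nonneg _)
              _ ≤ 2 * D₃ * (Real.sqrt 2 * Real.sqrt q) * Real.sqrt δ :=
                  mul_le_mul_of_nonneg_left hsqd (by positivity)
          refine e4.trans ?_
          have e5 : 2 * D₃ * (Real.sqrt 2 * Real.sqrt q) * Real.sqrt δ
              = (2 * Real.sqrt 2) * (Real.sqrt δ * D₃) * Real.sqrt q := by ring
          rw [e5]
          have e6 : (2 * Real.sqrt 2) * (Real.sqrt δ * D₃) ≤ 4 * (1/8) := by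
            apply mul_le_mul (by linarith) hδc (by positivity) (by norm_num)
          calc (2 * Real.sqrt 2) * (Real.sqrt δ * D₃) * Real.sqrt q
              ≤ (4 * (1/8)) * Real.sqrt q :=
                mul_le_mul_of_nonneg_right e6 (Real.sqrt_nonneg _)
            _ = 1 / 2 * Real.sqrt q := by ring
        have e7 : W * (2 * D₃ * Real.sqrt s * Real.sqrt (s - q) / Real.sqrt q)
            ≤ W * (1 / 2) :=
          mul_le_mul_of_nonneg_left e3 hW0
        calc D₃ * Real.sqrt s * (∫ r in Ioc q s, S r / Real.sqrt (s - r))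
            ≤ W * (2 * D₃ * Real.sqrt s * Real.sqrt (s - q) / Real.sqrt q) := by
              rw [← e2]; exact e1
          _ ≤ W * (1/2) := e7
          _ = W / 2 := by ring
      have hD2 : D₂ * ε * Real.sqrt s ≤ D₂ * ε * Real.sqrt T :=
        mul_le_mul_of_nonneg_left (Real.sqrt_le_sqrt hsT.2) (by positivity)
      rw [hsplit] at h0
      have final : Real.sqrt s * S s ≤ G * ε + W / 2 := by
        have expand : G * ε = K * ε + (D₁ + D₂ * Real.sqrt T) * ε
            + 4 * D₃ * Real.sqrt T * K * ε := by rw [hGdef]; ring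
        rw [expand]
        have hKε : 0 ≤ K * ε := by positivity
        have lhs_le : Real.sqrt s * S s ≤ D₁ * ε + D₂ * ε * Real.sqrt s
            + D₃ * Real.sqrt s * (∫ r in Ioc (0:ℝ) q, S r / Real.sqrt (s - r))
            + D₃ * Real.sqrt s * (∫ r in Ioc q s, S r / Real.sqrt (s - r)) := by
          have := h0
          linarith [this]
        linarith [lhs_le, ht1, ht2, hD2, hKε]
      exact final
  have hGε : (0:ℝ) ≤ G * ε := mul_nonneg hG hε.le
  have hWle : W ≤ G * ε + W / 2 := hWsup (Real.sSup_le key (by linarith))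
  have hW2 : W ≤ 2 * G * ε := by linarith
  intro s hs hsB
  rcases le_or_gt s B with hcase | hcase
  · refine (ih s hs hcase).trans ?_
    have hn : (0:ℝ) ≤ 4 * D₃ * Real.sqrt T * K := by positivity
    have : K ≤ 2 * G := by rw [hGdef]; linarith
    exact mul_le_mul_of_nonneg_right this hε.le
  · have hsL : s ∈ Ioc (0:ℝ) L := ⟨hs.1, by rw [hL]; exact le_min hsB hs.2⟩
    refine (hub s hsL).trans ?_
    linarith

theorem singular_gronwall_singular_forcing (T D₁ D₂ D₃ : ℝ) (hT : 0 < T)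
    (h1 : 0 ≤ D₁) (h2 : 0 ≤ D₂) (h3 : 0 ≤ D₃) (t : ℝ) (ht : t ∈ Ioc (0:ℝ) T) :
    ∃ C : ℝ, ∀ (ε : ℝ) (S : ℝ → ℝ), 0 < ε → Measurable S →
      (∀ s ∈ Ioc (0:ℝ) T, 0 ≤ S s) → (∃ M, ∀ s ∈ Ioc (0:ℝ) T, S s ≤ M) →
      (∀ s ∈ Ioc (0:ℝ) T, S s ≤ D₁ * ε / Real.sqrt s + D₂ * ε +
          D₃ * ∫ r in (0:ℝ)..s, S r / Real.sqrt (s - r)) →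
      S t ≤ C * ε := by
  obtain ⟨ht0, htT⟩ := ht
  set δ := min T ((1/(8*D₃+8))^2) with hδdef
  have hδ0 : 0 < δ := lt_min hT (by positivity)
  have hδT : δ ≤ T := min_le_left _ _
  have hδc : Real.sqrt δ * D₃ ≤ 1/8 := by
    have h8 : (0:ℝ) < 8*D₃+8 := by linarith
    have e1 : Real.sqrt δ ≤ 1/(8*D₃+8) := by
      have h9 := Real.sqrt_le_sqrt (min_le_right T ((1/(8*D₃+8))^2))
      rwa [Real.sqrt_sq (by positivity)] at h9
    have e2 : Real.sqrt δ * D₃ ≤ (1/(8*D₃+8)) * D₃ := mul_le_mul_of_nonneg_right e1 h3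
    refine e2.trans ?_
    rw [div_mul_eq_mul_div, one_mul, div_le_div_iff₀ h8 (by norm_num)]
    linarith
  have main : ∀ k : ℕ, ∃ K : ℝ, 0 ≤ K ∧ ∀ (ε : ℝ) (S : ℝ → ℝ) (M : ℝ), 0 < ε →
      Measurable S → (∀ s ∈ Ioc (0:ℝ) T, 0 ≤ S s) → (∀ s ∈ Ioc (0:ℝ) T, |S s| ≤ M) →
      (∀ s ∈ Ioc (0:ℝ) T, S s ≤ D₁ * ε / Real.sqrt s + D₂ * ε +
          D₃ * ∫ r in (0:ℝ)..s, S r / Real.sqrt (s - r)) →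
      ∀ s ∈ Ioc (0:ℝ) T, s ≤ ((k:ℝ)+1)*δ → Real.sqrt s * S s ≤ K * ε := by
    intro k
    induction k with
    | zero =>
      refine ⟨2*(D₁ + D₂*Real.sqrt T), by positivity, ?_⟩
      intro ε S M hε hS hpos hM hineq s hs hsk
      have hsk' : s ≤ δ := by
        have : ((0:ℕ):ℝ) + 1 = 1 := by norm_num
        rw [this, one_mul] at hsk
        exact hsk
      exact SG.base h1 h2 h3 hδ0 hδT hδc hε hS hpos hM hineq s hs hsk'
    | succ k ih =>
      obtain ⟨K, hK, hind⟩ := ih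
      refine ⟨2*(K + (D₁ + D₂*Real.sqrt T) + 4*D₃*Real.sqrt T*K), by positivity, ?_⟩
      intro ε S M hε hS hpos hM hineq s hs hsk
      have hB : δ ≤ ((k:ℝ)+1)*δ := by
        nlinarith [Nat.cast_nonneg (α := ℝ) k]
      have hsk' : s ≤ ((k:ℝ)+1)*δ + δ := by
        have : (((k:ℕ)+1:ℕ):ℝ) + 1 = ((k:ℝ)+1) + 1 := by push_cast; ring
        rw [this] at hsk
        linarith
      exact SG.step h1 h2 h3 hδ0 hδT hδc hε hS hpos hM hineq hB hK
        (hind ε S M hε hS hpos hM hineq) s hs hsk'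
  set k := ⌈T/δ⌉₊ with hk
  have hTk : T ≤ ((k:ℝ)+1)*δ := by
    have h9 : T/δ ≤ (k:ℝ) := Nat.le_ceil _
    have h10 : T/δ * δ ≤ (k:ℝ) * δ := mul_le_mul_of_nonneg_right h9 hδ0.le
    rw [div_mul_cancel₀ _ hδ0.ne'] at h10
    nlinarith
  obtain ⟨K, hK, hind⟩ := main k
  refine ⟨K / Real.sqrt t, ?_⟩
  intro ε S hε hS hpos hMex hineq
  obtain ⟨M, hM⟩ := hMex
  have hM' : ∀ s ∈ Ioc (0:ℝ) T, |S s| ≤ max M 0 := by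
    intro s hs
    rw [abs_of_nonneg (hpos s hs)]
    exact (hM s hs).trans (le_max_left _ _)
  have hmain := hind ε S (max M 0) hε hS hpos hM' hineq t ⟨ht0, htT⟩ (htT.trans hTk)
  have hsqt : 0 < Real.sqrt t := Real.sqrt_pos.2 ht0
  have : S t ≤ K * ε / Real.sqrt t := by
    rw [le_div_iff₀ hsqt]
    rw [mul_comm] at hmain
    exact hmain
  refine this.trans (le_of_eq ?_)
  ring
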